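/- Let A be a positive normalized linear functional on L, let f ∈ C^n([a,b]), let 3 ≤ m ≤ n−1, and let g ∈ L with f∘g ∈ L. Then LR(f,g,a,b,A) = (A(g)−a)·(f[a,a] − f[a,b]) + Σ_{k=2}^{m-1} (f^{(k)}(a)/k!) · A[(g−a1)^k] + Σ_{k=1}^{n-m} f[a,…,a (m times); b,…,b (k times)] · A[(g−a1)^m (g−b1)^{k−1}] + A(R_m(g)), where R_m(t) = (t−a)^m (t−b)^{n−m} · f[t; a,…,a (m times); b,…,b ((n−m) times)]. -/

import Mathlib

/-- Divided difference of `f` at a (sorted) list of points, with repeated points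
handled via derivatives (taken within the set `s`). -/
noncomputable def divDiff (s : Set ℝ) (f : ℝ → ℝ) : List ℝ → ℝ
  | [] => 0
  | [x] => f x
  | x :: y :: l =>
    if x = (y :: l).getLast (List.cons_ne_nil y l) then
      iteratedDerivWithin (l.length + 1) f s x / Nat.factorial (l.length + 1)
    else
      (divDiff s f (y :: l) - divDiff s f (x :: (y :: l).dropLast)) /
        ((y :: l).getLast (List.cons_ne_nil y l) - x)
termination_by l => l.length
decreasing_by
  all_goals simp [List.length_dropLast]

variable (s : Set ℝ) (f : ℝ → ℝ)

lemma divDiff_single (x : ℝ) : divDiff s f [x] = f x := by simp [divDiff]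

lemma divDiff_rec (x y : ℝ) (L : List ℝ) (hxy : x ≠ y) :
    divDiff s f (x :: (L ++ [y])) =
      (divDiff s f (L ++ [y]) - divDiff s f (x :: L)) / (y - x) := by
  cases L with
  | nil =>
      simp only [List.nil_append]
      rw [divDiff.eq_3]
      simp [hxy, divDiff_single]
  | cons z L' =>
      simp only [List.cons_append]
      have hl : (z :: (L' ++ [y])).getLast (List.cons_ne_nil _ _) = y :=
        List.getLast_append_singleton (z :: L')
      conv_lhs => rw [divDiff.eq_3]
      rw [hl, if_neg hxy,
        show z :: (L' ++ [y]) = (z :: L') ++ [y] from rfl, List.dropLast_concat]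

lemma divDiff_replicate (c : ℝ) (q : ℕ) :
    divDiff s f (List.replicate (q + 1) c) = iteratedDerivWithin q f s c / Nat.factorial q := by
  cases q with
  | zero => simp [divDiff]
  | succ q =>
      have hc : c = (c :: List.replicate q c).getLast (List.cons_ne_nil _ _) :=
        (List.getLast_replicate (n := q + 1) (a := c) (by simp)).symm
      rw [show List.replicate (q + 2) c = c :: c :: List.replicate q c from rfl, divDiff.eq_3,
        if_pos hc]
      simp

variable (a b : ℝ)

lemma divDiff_D_rec (hab : a ≠ b) (p q : ℕ) :
    divDiff s f (List.replicate (p+1) a ++ List.replicate (q+1) b) =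
      (divDiff s f (List.replicate p a ++ List.replicate (q+1) b) -
        divDiff s f (List.replicate (p+1) a ++ List.replicate q b)) / (b - a) := by
  have h1 : List.replicate (p+1) a ++ List.replicate (q+1) b =
      a :: ((List.replicate p a ++ List.replicate q b) ++ [b]) := by
    rw [List.replicate_succ' (n := q), List.replicate_succ (n := p)]
    simp
  have h2 : (List.replicate p a ++ List.replicate q b) ++ [b] =
      List.replicate p a ++ List.replicate (q+1) b := by
    rw [List.replicate_succ' (n := q)]; simp
  have h3 : a :: (List.replicate p a ++ List.replicate q b) =
      List.replicate (p+1) a ++ List.replicate q b := rfl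
  rw [h1, divDiff_rec s f a b _ hab, h2, h3]

lemma divDiff_E_rec (hab : a ≠ b) (x : ℝ) (p q : ℕ) :
    divDiff s f (List.replicate (p+1) a ++ x :: List.replicate (q+1) b) =
      (divDiff s f (List.replicate p a ++ x :: List.replicate (q+1) b) -
        divDiff s f (List.replicate (p+1) a ++ x :: List.replicate q b)) / (b - a) := by
  have h1 : List.replicate (p+1) a ++ x :: List.replicate (q+1) b =
      a :: ((List.replicate p a ++ x :: List.replicate q b) ++ [b]) := by
    rw [List.replicate_succ' (n := q), List.replicate_succ (n := p)]
    simp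
  have h2 : (List.replicate p a ++ x :: List.replicate q b) ++ [b] =
      List.replicate p a ++ x :: List.replicate (q+1) b := by
    rw [List.replicate_succ' (n := q)]; simp
  have h3 : a :: (List.replicate p a ++ x :: List.replicate q b) =
      List.replicate (p+1) a ++ x :: List.replicate q b := rfl
  rw [h1, divDiff_rec s f a b _ hab, h2, h3]

lemma divDiff_E0_rec (x : ℝ) (hxb : x ≠ b) (q : ℕ) :
    divDiff s f (x :: List.replicate (q+1) b) =
      (divDiff s f (List.replicate (q+1) b) - divDiff s f (x :: List.replicate q b)) /
        (b - x) := by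
  have h1 : x :: List.replicate (q+1) b = x :: (List.replicate q b ++ [b]) := by
    rw [List.replicate_succ' (n := q)]
  rw [h1, divDiff_rec s f x b _ hxb, ← List.replicate_succ' (n := q)]

lemma divDiff_Ep0_rec (x : ℝ) (hxa : x ≠ a) (p : ℕ) :
    divDiff s f (List.replicate (p+1) a ++ [x]) =
      (divDiff s f (List.replicate p a ++ [x]) - divDiff s f (List.replicate (p+1) a)) /
        (x - a) := by
  have h1 : List.replicate (p+1) a ++ [x] = a :: (List.replicate p a ++ [x]) := rfl
  have h2 : a :: List.replicate p a = List.replicate (p+1) a := rfl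
  rw [h1, divDiff_rec s f a x _ (Ne.symm hxa), h2]

lemma lemA (x : ℝ) (p : ℕ) :
    (x - a) * divDiff s f (List.replicate (p+1) a ++ [x]) =
      divDiff s f (List.replicate p a ++ [x]) -
        iteratedDerivWithin p f s a / Nat.factorial p := by
  by_cases hx : x = a
  · have h1 : List.replicate (p+1) a ++ [x] = List.replicate (p+2) a := by
      rw [hx, List.replicate_succ' (n := p+1)]
    have h2 : List.replicate p a ++ [x] = List.replicate (p+1) a := by
      rw [hx, List.replicate_succ' (n := p)]
    rw [h1, h2, divDiff_replicate, divDiff_replicate, hx]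
    ring
  · rw [divDiff_Ep0_rec s f a x hx p, divDiff_replicate, ← mul_div_assoc,
      mul_div_cancel_left₀ _ (sub_ne_zero.mpr hx)]

lemma lemS (hab : a ≠ b) (x : ℝ) :
    ∀ p q : ℕ, divDiff s f (List.replicate p a ++ x :: List.replicate q b) =
      divDiff s f (List.replicate p a ++ List.replicate (q+1) b) +
        (x - b) * divDiff s f (List.replicate p a ++ x :: List.replicate (q+1) b) := by
  have hba : b - a ≠ 0 := sub_ne_zero.mpr (Ne.symm hab)
  intro p
  induction p with
  | zero =>
      intro q
      simp only [List.replicate_zero, List.nil_append]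
      by_cases hx : x = b
      · have h1 : x :: List.replicate q b = List.replicate (q+1) b := by rw [hx]; rfl
        have h2 : x :: List.replicate (q+1) b = List.replicate (q+2) b := by rw [hx]; rfl
        rw [h1, h2, divDiff_replicate, divDiff_replicate, hx]
        ring
      · rw [divDiff_E0_rec s f b x hx q]
        field_simp [sub_ne_zero.mpr (Ne.symm hx)]
        ring
  | succ p ih =>
      intro q
      induction q with
      | zero =>
          have e0 : List.replicate (p+1) a ++ x :: List.replicate 0 b =
              List.replicate (p+1) a ++ [x] := rfl
          have e0' : List.replicate p a ++ x :: List.replicate 0 b =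
              List.replicate p a ++ [x] := rfl
          have h3 : divDiff s f (List.replicate (p+1) a ++ List.replicate 0 b) =
              iteratedDerivWithin p f s a / Nat.factorial p := by
            simpa using divDiff_replicate s f a p
          rw [divDiff_D_rec s f a b hab p 0, divDiff_E_rec s f a b hab x p 0, e0, h3]
          have h1 := lemA s f a x p
          have h2 := ih 0
          rw [e0'] at h2
          rw [← mul_div_assoc, ← add_div, eq_div_iff hba]
          linear_combination h1 + h2
      | succ q ihq =>
          rw [divDiff_E_rec s f a b hab x p q, divDiff_D_rec s f a b hab p (q+1),
            divDiff_E_rec s f a b hab x p (q+1)]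
          rw [← mul_div_assoc, ← add_div, div_eq_div_iff hba hba]
          linear_combination (b - a) * (ih (q+1)) - (b - a) * ihq

lemma telesA (x : ℝ) : ∀ P : ℕ, f x =
    (∑ j ∈ Finset.range P,
      iteratedDerivWithin j f s a / Nat.factorial j * (x - a) ^ j) +
    (x - a) ^ P * divDiff s f (List.replicate P a ++ [x]) := by
  intro P
  induction P with
  | zero => simp [divDiff_single]
  | succ P ih =>
      rw [Finset.sum_range_succ]
      have h := lemA s f a x P
      linear_combination ih - (x - a) ^ P * h

lemma telesB (hab : a ≠ b) (x : ℝ) (p : ℕ) : ∀ K : ℕ,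
    divDiff s f (List.replicate p a ++ [x]) =
      (∑ k ∈ Finset.range K,
        divDiff s f (List.replicate p a ++ List.replicate (k+1) b) * (x - b) ^ k) +
      (x - b) ^ K * divDiff s f (List.replicate p a ++ x :: List.replicate K b) := by
  intro K
  induction K with
  | zero => simp
  | succ K ih =>
      rw [Finset.sum_range_succ]
      have h := lemS s f a b hab x p K
      linear_combination ih + (x - b) ^ K * h

lemma pointwise (hab : a ≠ b) (M K : ℕ) (x : ℝ) :
    f x - (b - x) / (b - a) * f a - (x - a) / (b - a) * f b =
      (x - a) * (divDiff s f [a, a] - divDiff s f [a, b]) +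
      (∑ k ∈ Finset.Icc 2 (M + 1),
        iteratedDerivWithin k f s a / Nat.factorial k * (x - a) ^ k) +
      (∑ k ∈ Finset.Icc 1 K,
        divDiff s f (List.replicate (M + 2) a ++ List.replicate k b) *
          ((x - a) ^ (M + 2) * (x - b) ^ (k - 1))) +
      (x - a) ^ (M + 2) * (x - b) ^ K *
        divDiff s f (List.replicate (M + 2) a ++ x :: List.replicate K b) := by
  have hba : b - a ≠ 0 := sub_ne_zero.mpr (Ne.symm hab)
  have T1 := telesA s f a x (M + 2)
  have T2 := telesB s f a b hab x (M + 2) K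
  have d2 : divDiff s f [a, a] = iteratedDerivWithin 1 f s a := by
    have := divDiff_replicate s f a 1
    simpa using this
  have dab : divDiff s f [a, b] = (f b - f a) / (b - a) := by
    have h := divDiff_rec s f a b [] hab
    simpa [divDiff_single] using h
  rw [Finset.sum_range_succ' _ (M + 1), Finset.sum_range_succ' _ M] at T1
  simp only [Nat.zero_add, pow_zero, pow_one, Nat.factorial_one, Nat.factorial_zero,
    Nat.cast_one, div_one, mul_one, iteratedDerivWithin_zero] at T1
  have e2 : (∑ k ∈ Finset.Icc 2 (M + 1),
      iteratedDerivWithin k f s a / Nat.factorial k * (x - a) ^ k) =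
      ∑ i ∈ Finset.range M,
        iteratedDerivWithin (i + 1 + 1) f s a / Nat.factorial (i + 1 + 1) *
          (x - a) ^ (i + 1 + 1) := by
    rw [← Finset.Ico_add_one_right_eq_Icc, Finset.sum_Ico_eq_sum_range]
    apply Finset.sum_congr (by congr 1)
    intro i _
    have h : 2 + i = i + 1 + 1 := by omega
    rw [h]
  have e3 : (∑ k ∈ Finset.Icc 1 K,
      divDiff s f (List.replicate (M + 2) a ++ List.replicate k b) *
        ((x - a) ^ (M + 2) * (x - b) ^ (k - 1))) =
      (x - a) ^ (M + 2) * ∑ k ∈ Finset.range K,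
        divDiff s f (List.replicate (M + 2) a ++ List.replicate (k + 1) b) * (x - b) ^ k := by
    rw [Finset.mul_sum, ← Finset.Ico_add_one_right_eq_Icc, Finset.sum_Ico_eq_sum_range]
    apply Finset.sum_congr (by congr 1)
    intro i _
    have h : 1 + i = i + 1 := by omega
    rw [h]
    simp only [Nat.add_sub_cancel]
    ring
  rw [e2, e3, d2, dab]
  have hr : (b - a) * (b - a)⁻¹ = 1 := mul_inv_cancel₀ hba
  linear_combination T1 + (x - a) ^ (M + 2) * T2 - f a * hr


/-- Identity (2.5) of Lemma 2.1: the `(m, n-m)` Hermite expansion of the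
Edmundson–Lah–Ribarič difference `LR(f,g,a,b,A)`, for `3 ≤ m ≤ n-1`. -/
theorem lemma21_general_m {E : Type*} [Nonempty E]
    (a b : ℝ) (hab : a < b) (n m : ℕ) (hm : 3 ≤ m) (hmn : m + 1 ≤ n)
    (f : ℝ → ℝ) (hf : ContDiffOn ℝ n f (Set.Icc a b))
    (A : (E → ℝ) →ₗ[ℝ] ℝ)
    (hApos : ∀ h : E → ℝ, (∀ t, 0 ≤ h t) → 0 ≤ A h)
    (hA1 : A (fun _ => (1 : ℝ)) = 1)
    (g : E → ℝ) (hg : ∀ t, g t ∈ Set.Icc a b) :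
    A (fun t => f (g t)) - (b - A g) / (b - a) * f a - (A g - a) / (b - a) * f b =
      (A g - a) * (divDiff (Set.Icc a b) f [a, a] - divDiff (Set.Icc a b) f [a, b]) +
      (∑ k ∈ Finset.Icc 2 (m - 1),
        iteratedDerivWithin k f (Set.Icc a b) a / Nat.factorial k *
          A (fun t => (g t - a) ^ k)) +
      (∑ k ∈ Finset.Icc 1 (n - m),
        divDiff (Set.Icc a b) f (List.replicate m a ++ List.replicate k b) *
          A (fun t => (g t - a) ^ m * (g t - b) ^ (k - 1))) +
      A (fun t => (g t - a) ^ m * (g t - b) ^ (n - m) *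
          divDiff (Set.Icc a b) f
            (List.replicate m a ++ g t :: List.replicate (n - m) b)) := by
  obtain ⟨M, rfl⟩ : ∃ M, m = M + 2 := ⟨m - 2, by omega⟩
  have hab' : a ≠ b := ne_of_lt hab
  rw [show M + 2 - 1 = M + 1 from rfl]
  set s : Set ℝ := Set.Icc a b with hs
  set K : ℕ := n - (M + 2) with hK
  set c1 : ℝ := divDiff s f [a, a] - divDiff s f [a, b] with hc1
  set Fa : E → ℝ := fun t => b - g t with hFadef
  set Fb : E → ℝ := fun t => g t - a with hFbdef
  have hA0 : A (fun t => f (g t)) =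
      A ((f a / (b - a)) • Fa + (f b / (b - a)) • Fb + c1 • Fb +
        (∑ k ∈ Finset.Icc 2 (M + 1),
          (iteratedDerivWithin k f s a / Nat.factorial k) • fun t : E => (g t - a) ^ k) +
        (∑ k ∈ Finset.Icc 1 K,
          divDiff s f (List.replicate (M + 2) a ++ List.replicate k b) •
            fun t : E => (g t - a) ^ (M + 2) * (g t - b) ^ (k - 1)) +
        fun t : E => (g t - a) ^ (M + 2) * (g t - b) ^ K *
          divDiff s f (List.replicate (M + 2) a ++ g t :: List.replicate K b)) := by
    congr 1
    funext t
    simp only [Pi.add_apply, Pi.smul_apply, Finset.sum_apply, smul_eq_mul, hFadef, hFbdef]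
    linear_combination pointwise s f a b hab' M K (g t)
  simp only [map_add, map_smul, map_sum, smul_eq_mul] at hA0
  have hFb : A Fb = A g - a := by
    have h : Fb = g + (-a) • (fun _ : E => (1 : ℝ)) := by
      funext t; simp [hFbdef]; ring
    rw [h, map_add, map_smul, hA1, smul_eq_mul]; ring
  have hFa : A Fa = b - A g := by
    have h : Fa = b • (fun _ : E => (1 : ℝ)) + (-1 : ℝ) • g := by
      funext t; simp [hFadef]; ring
    rw [h, map_add, map_smul, map_smul, hA1, smul_eq_mul, smul_eq_mul]; ring
  rw [hA0, hFa, hFb]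
  have hr : (b - a) * (b - a)⁻¹ = 1 := mul_inv_cancel₀ (sub_ne_zero.mpr (Ne.symm hab'))
  ring
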